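/- arXiv:0906.5560 — 5 statements merged into one kernel-verified Lean document; each statement's English description precedes it below -/
import Mathlib

section
/- Poisson generator correctness. Let λ ∈ (0,1). Suppose N is a random variable with P(N = n) = (1−λ)λⁿ for all n ∈ ℕ, and A is an event with P(A | N = n) = 1/n! for every n (acceptance iff the N auxiliary uniform variables are sorted increasingly). Then P(N = n | A) = e^{−λ} λⁿ/n! for every n ∈ ℕ; that is, conditionally on acceptance, N has the Poisson distribution of parameter λ. -/
open MeasureTheory ProbabilityTheory
open scoped ENNReal Nat

/-- Poisson generator correctness.  If `N` is geometric, `P(N = n) = (1-λ)λⁿ`,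
and `A` is an acceptance event with `P(A | N = n) = 1/n!` for all `n`, then
conditionally on `A`, `N` is Poisson(λ): `P(N = n | A) = e^{-λ} λⁿ/n!`. -/
theorem stmt6 {Ω : Type*} [MeasurableSpace Ω] (μ : Measure Ω) [IsProbabilityMeasure μ]
    (lam : ℝ) (hl0 : 0 < lam) (hl1 : lam < 1)
    (N : Ω → ℕ) (hN : Measurable N) (A : Set Ω) (hA : MeasurableSet A)
    (hgeo : ∀ n : ℕ, μ {ω | N ω = n} = ENNReal.ofReal ((1 - lam) * lam ^ n))
    (hcond : ∀ n : ℕ, μ[|{ω | N ω = n}] A = ((n ! : ℝ≥0∞))⁻¹) :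
    ∀ n : ℕ, μ[|A] {ω | N ω = n}
      = ENNReal.ofReal (Real.exp (-lam) * lam ^ n / n !) := by
  have hmeas : ∀ n : ℕ, MeasurableSet {ω | N ω = n} := fun n =>
    hN (measurableSet_singleton n)
  have h1l : (0:ℝ) < 1 - lam := by linarith
  have hposR : ∀ n : ℕ, 0 < (1 - lam) * lam ^ n / n ! := by
    intro n
    have : (0:ℝ) < (n ! : ℝ) := by positivity
    positivity
  -- μ (A ∩ {N = n}) = ofReal ((1-λ) λ^n / n!)
  have hinter : ∀ n : ℕ, μ (A ∩ {ω | N ω = n})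
      = ENNReal.ofReal ((1 - lam) * lam ^ n / n !) := by
    intro n
    have h := hcond n
    rw [cond_apply (hmeas n)] at h
    have hne : μ {ω | N ω = n} ≠ 0 := by
      rw [hgeo n]
      simp only [ne_eq, ENNReal.ofReal_eq_zero, not_le]
      have : (0:ℝ) < lam ^ n := by positivity
      nlinarith
    have htop : μ {ω | N ω = n} ≠ ⊤ := measure_ne_top μ _
    have h2 : μ ({ω | N ω = n} ∩ A) = ((n ! : ℝ≥0∞))⁻¹ * μ {ω | N ω = n} := by
      calc μ ({ω | N ω = n} ∩ A)
          = μ {ω | N ω = n} * ((μ {ω | N ω = n})⁻¹ * μ ({ω | N ω = n} ∩ A)) := by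
            rw [← mul_assoc, ENNReal.mul_inv_cancel hne htop, one_mul]
        _ = μ {ω | N ω = n} * ((n ! : ℝ≥0∞))⁻¹ := by rw [h]
        _ = ((n ! : ℝ≥0∞))⁻¹ * μ {ω | N ω = n} := mul_comm _ _
    rw [Set.inter_comm, h2, hgeo n]
    rw [show ((n ! : ℝ≥0∞)) = ENNReal.ofReal (n ! : ℝ) by
      simp [ENNReal.ofReal_natCast]]
    rw [← ENNReal.ofReal_inv_of_pos (by positivity : (0:ℝ) < (n ! : ℝ)),
      ← ENNReal.ofReal_mul (by positivity)]
    ring_nf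
  -- μ A = ofReal ((1-λ) e^λ)
  have hsummable : Summable (fun n : ℕ => (1 - lam) * lam ^ n / n !) := by
    simpa [mul_div_assoc] using
      (Real.summable_pow_div_factorial lam).mul_left (1 - lam)
  have htsum : ∑' n : ℕ, (1 - lam) * lam ^ n / n ! = (1 - lam) * Real.exp lam := by
    rw [Real.exp_eq_exp_ℝ, NormedSpace.exp_eq_tsum_div, ← tsum_mul_left]
    simp [mul_div_assoc]
  have hA' : μ A = ENNReal.ofReal ((1 - lam) * Real.exp lam) := by
    have hcover : A = ⋃ n : ℕ, A ∩ {ω | N ω = n} := by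
      ext ω; simp
    have hdisj : Pairwise (Function.onFun Disjoint fun n : ℕ => A ∩ {ω | N ω = n}) := by
      intro i j hij
      apply Set.disjoint_left.mpr
      rintro ω ⟨-, hi⟩ ⟨-, hj⟩
      exact hij (hi.symm.trans hj)
    have hmu : μ A = ∑' n : ℕ, μ (A ∩ {ω | N ω = n}) := by
      conv_lhs => rw [hcover]
      exact measure_iUnion hdisj fun n => hA.inter (hmeas n)
    calc μ A = ∑' n : ℕ, μ (A ∩ {ω | N ω = n}) := hmu
      _ = ∑' n : ℕ, ENNReal.ofReal ((1 - lam) * lam ^ n / n !) := by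
          simp_rw [hinter]
      _ = ENNReal.ofReal ((1 - lam) * Real.exp lam) := by
          rw [← htsum, ENNReal.ofReal_tsum_of_nonneg (fun n => (hposR n).le) hsummable]
  intro n
  have hexp : (0:ℝ) < Real.exp lam := Real.exp_pos lam
  rw [cond_apply hA, hA', hinter n,
    ← ENNReal.ofReal_inv_of_pos (by positivity),
    ← ENNReal.ofReal_mul (by positivity)]
  congr 1
  have hfac : (0:ℝ) < (n ! : ℝ) := by positivity
  rw [Real.exp_neg]
  field_simp
end

section
/- Logarithmic generator correctness. Let λ ∈ (0,1) and L := log(1/(1−λ)). Suppose N is a random variable with P(N = n) = (1−λ)λⁿ for all n ∈ ℕ, and A is an event with P(A | N = n) = 1/n for every n ≥ 1 and P(A | N = 0) = 0 (acceptance iff the first of the N auxiliary uniform variables is the maximum). Then P(N = n | A) = (1/L) · λⁿ/n for every n ≥ 1; that is, conditionally on acceptance, N has the logarithmic distribution of parameter λ. -/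
open MeasureTheory ProbabilityTheory
open scoped ENNReal Nat

/-- Logarithmic generator correctness.  If `N` is geometric, `P(N = n) = (1-λ)λⁿ`,
and `A` is an acceptance event with `P(A | N = n) = 1/n` for `n ≥ 1` and
`P(A | N = 0) = 0`, then conditionally on `A`, `N` is logarithmic of parameter λ:
`P(N = n | A) = (1/L) λⁿ/n` for `n ≥ 1`, where `L = log (1/(1-λ))`. -/
theorem stmt7 {Ω : Type*} [MeasurableSpace Ω] (μ : Measure Ω) [IsProbabilityMeasure μ]
    (lam : ℝ) (hl0 : 0 < lam) (hl1 : lam < 1)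
    (L : ℝ) (hL : L = Real.log (1 / (1 - lam)))
    (N : Ω → ℕ) (hN : Measurable N) (A : Set Ω) (hA : MeasurableSet A)
    (hgeo : ∀ n : ℕ, μ {ω | N ω = n} = ENNReal.ofReal ((1 - lam) * lam ^ n))
    (hcond : ∀ n : ℕ, 1 ≤ n → μ[|{ω | N ω = n}] A = ((n : ℝ≥0∞))⁻¹)
    (hcond0 : μ[|{ω | N ω = 0}] A = 0) :
    ∀ n : ℕ, 1 ≤ n → μ[|A] {ω | N ω = n}
      = ENNReal.ofReal ((1 / L) * (lam ^ n / n)) := by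
  have h1l : (0:ℝ) < 1 - lam := by linarith
  have hLpos : 0 < L := by
    rw [hL]
    exact Real.log_pos (one_lt_one_div h1l (by linarith))
  have hmeas : ∀ n : ℕ, MeasurableSet {ω | N ω = n} := fun n =>
    hN (measurableSet_singleton n)
  -- joint probabilities
  have hzero : μ ({ω | N ω = 0} ∩ A) = 0 := by
    have := hcond0
    rw [ProbabilityTheory.cond_apply (hmeas 0) μ A] at this
    rcases mul_eq_zero.mp this with h | h
    · exfalso
      have : μ {ω | N ω = 0} ≠ ⊤ := (measure_ne_top μ _)
      rw [ENNReal.inv_eq_zero] at h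
      exact this h
    · exact h
  have hjoint : ∀ n : ℕ, 1 ≤ n →
      μ ({ω | N ω = n} ∩ A) = ENNReal.ofReal ((1 - lam) * lam ^ n / n) := by
    intro n hn
    have hc := hcond n hn
    rw [ProbabilityTheory.cond_apply (hmeas n) μ A] at hc
    have hs : μ {ω | N ω = n} = ENNReal.ofReal ((1 - lam) * lam ^ n) := hgeo n
    have hspos : μ {ω | N ω = n} ≠ 0 := by
      rw [hs]
      simp [ENNReal.ofReal_eq_zero, not_le]
      positivity
    have hstop : μ {ω | N ω = n} ≠ ⊤ := measure_ne_top μ _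
    have : μ ({ω | N ω = n} ∩ A) = μ {ω | N ω = n} * ((n : ℝ≥0∞))⁻¹ := by
      calc μ ({ω | N ω = n} ∩ A)
          = μ {ω | N ω = n} * ((μ {ω | N ω = n})⁻¹ * μ ({ω | N ω = n} ∩ A)) := by
            rw [← mul_assoc, ENNReal.mul_inv_cancel hspos hstop, one_mul]
        _ = μ {ω | N ω = n} * ((n : ℝ≥0∞))⁻¹ := by rw [hc]
    rw [this, hs]
    have hninv : ((n : ℝ≥0∞))⁻¹ = ENNReal.ofReal ((n : ℝ)⁻¹) := by
      rw [ENNReal.ofReal_inv_of_pos (by exact_mod_cast hn), ENNReal.ofReal_natCast]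
    rw [hninv, ← ENNReal.ofReal_mul (by positivity)]
    ring_nf
  -- μ A as a sum
  have hAsum : μ A = ∑' n : ℕ, μ ({ω | N ω = n} ∩ A) := by
    have hcover : A = ⋃ n : ℕ, ({ω | N ω = n} ∩ A) := by
      ext ω; simp
    have hdis : Pairwise (Function.onFun Disjoint fun n : ℕ => ({ω | N ω = n} ∩ A)) := by
      intro i j hij
      simp only [Set.disjoint_left, Function.onFun]
      rintro ω ⟨hi, -⟩ ⟨hj, -⟩
      exact hij (hi.symm.trans hj)
    nth_rewrite 1 [hcover]
    exact measure_iUnion hdis fun n => (hmeas n).inter hA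
  -- the series
  have hsumreal : HasSum (fun n : ℕ => (1 - lam) * lam ^ (n + 1) / (n + 1)) ((1 - lam) * L) := by
    have h := Real.hasSum_pow_div_log_of_abs_lt_one (x := lam) (by rw [abs_of_pos hl0]; exact hl1)
    have hLeq : L = -Real.log (1 - lam) := by
      rw [hL, one_div, Real.log_inv]
    rw [hLeq]
    simpa [mul_div_assoc] using h.mul_left (1 - lam)
  have hmuA : μ A = ENNReal.ofReal ((1 - lam) * L) := by
    rw [hAsum, tsum_eq_zero_add' ENNReal.summable, hzero, zero_add]
    have : ∀ n : ℕ, μ ({ω | N ω = n + 1} ∩ A)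
        = ENNReal.ofReal ((1 - lam) * lam ^ (n + 1) / (n + 1)) := by
      intro n
      rw [hjoint (n + 1) (Nat.le_add_left 1 n)]
      push_cast
      ring_nf
    simp_rw [this]
    rw [← ENNReal.ofReal_tsum_of_nonneg (fun n => by positivity) hsumreal.summable,
      hsumreal.tsum_eq]
  -- conclude
  intro n hn
  rw [ProbabilityTheory.cond_apply hA μ _, Set.inter_comm, hjoint n hn, hmuA]
  have hpos : (0:ℝ) < (1 - lam) * L := by positivity
  have hnpos : (0:ℝ) < n := by exact_mod_cast hn
  have hr : (1 / L) * (lam ^ n / n) = ((1 - lam) * lam ^ n / n) / ((1 - lam) * L) := by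
    field_simp
  rw [hr, ENNReal.ofReal_div_of_pos hpos, div_eq_mul_inv, mul_comm]
  exact (div_eq_mul_inv _ _)
end

section
/- Lagrange-inversion identity for the generalized square-root construction. Let t ≥ 2 be an integer and work in the ring of formal power series ℚ[[z]]. There is a unique formal power series Y with zero constant term satisfying Y = z + z·Y^t, and for this Y one has the identity ∑_{n≥0} binom(tn, n) z^{tn} = 1/(1 − t·z·Y^{t−1}), i.e. (1 − t·z·Y(z)^{t−1}) · ∑_{n≥0} binom(tn,n) z^{tn} = 1. In particular, for t = 3, with Y = z + zY³ (the generating function of ternary trees), ∑_{n≥0} binom(3n,n) z^{3n} = 1/(1 − 3zY(z)²). -/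
open PowerSeries


lemma sq11_natkey (a k n : ℕ) (hk : 1 ≤ k) (hn : 1 ≤ n) :
    ∑ i ∈ Finset.range (k+1), k.choose i * (if i ≤ n then i * a.choose (n - i) else 0)
      = k * (k - 1 + a).choose (n - 1) := by
  have hterm : ∀ j, k.choose (j+1) * (if j+1 ≤ n then (j+1) * a.choose (n - (j+1)) else 0)
      = k * ((k-1).choose j * (if j ≤ n - 1 then a.choose (n - 1 - j) else 0)) := by
    intro j
    have h1 : k.choose (j+1) * (j+1) = k * (k-1).choose j := by
      have h := Nat.add_one_mul_choose_eq (k-1) j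
      simp only [Nat.succ_eq_add_one, Nat.sub_add_cancel hk] at h
      omega
    by_cases hjn : j + 1 ≤ n
    · rw [if_pos hjn, if_pos (by omega)]
      have : n - (j+1) = n - 1 - j := by omega
      rw [this]
      nlinarith [h1]
    · rw [if_neg hjn, if_neg (by omega)]
      simp
  rw [Finset.sum_range_succ']
  simp only [hterm]
  have h0 : k.choose 0 * (if 0 ≤ n then 0 * a.choose (n - 0) else 0) = 0 := by simp
  rw [h0, add_zero, ← Finset.mul_sum]
  congr 1
  have hvan : (k - 1 + a).choose (n - 1)
      = ∑ p ∈ Finset.range n, (k-1).choose p * a.choose (n - 1 - p) := by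
    rw [Nat.add_choose_eq]
    rw [Finset.Nat.sum_antidiagonal_eq_sum_range_succ_mk, show (n-1).succ = n from by omega]
  rw [hvan]
  have hL : ∑ j ∈ Finset.range k, (k-1).choose j * (if j ≤ n - 1 then a.choose (n - 1 - j) else 0)
      = ∑ j ∈ Finset.range (max k n), (k-1).choose j * (if j ≤ n - 1 then a.choose (n - 1 - j) else 0) := by
    apply Finset.sum_subset (Finset.range_subset_range.mpr (le_max_left _ _))
    intro j _ hj
    have : k - 1 < j := by simp at hj; omega
    rw [Nat.choose_eq_zero_of_lt this, zero_mul]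
  have hR : ∑ p ∈ Finset.range n, (k-1).choose p * a.choose (n - 1 - p)
      = ∑ j ∈ Finset.range (max k n), (k-1).choose j * (if j ≤ n - 1 then a.choose (n - 1 - j) else 0) := by
    rw [show ∑ p ∈ Finset.range n, (k-1).choose p * a.choose (n - 1 - p)
        = ∑ p ∈ Finset.range n, (k-1).choose p * (if p ≤ n - 1 then a.choose (n - 1 - p) else 0) from
      Finset.sum_congr rfl (fun p hp => by rw [if_pos (by simp at hp; omega)])]
    apply Finset.sum_subset (Finset.range_subset_range.mpr (le_max_right _ _))
    intro j _ hj
    rw [if_neg (by simp at hj; omega), mul_zero]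
  rw [hL, hR]



noncomputable def sqc (t k m : ℕ) : ℚ :=
  if m = 0 then (if k = 0 then 1 else 0)
  else if k ≤ m ∧ t ∣ (m - k) then (k : ℚ) / m * ((m.choose ((m - k) / t)) : ℚ) else 0

lemma sq11_sum (t k m : ℕ) (ht : 2 ≤ t) (hk : 1 ≤ k) (hkm : k ≤ m) :
    ∑ i ∈ Finset.range (k+1), (k.choose i : ℚ) * sqc t (t*i) (m-k) = sqc t k m := by
  have ht0 : (0:ℕ) < t := by omega
  by_cases hr0 : m - k = 0
  · -- m = k
    have hm : m = k := by omega
    rw [hr0]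
    have hval : ∀ i, sqc t (t*i) 0 = if i = 0 then 1 else 0 := by
      intro i
      simp only [sqc, if_pos rfl]
      by_cases h : i = 0
      · simp [h]
      · have hti : ¬ t*i = 0 := by
          have := Nat.mul_pos ht0 (show 0 < i by omega)
          omega
        rw [if_true, if_neg hti, if_neg h]
    simp only [hval]
    rw [Finset.sum_eq_single 0 (fun i _ hi => by rw [if_neg hi, mul_zero])
      (fun h => absurd (Finset.mem_range.mpr (by omega)) h)]
    rw [if_pos rfl, Nat.choose_zero_right, mul_one, sqc, if_neg (by omega : ¬ m = 0),
      if_pos ⟨hkm, by rw [hr0]; exact dvd_zero t⟩, hr0, Nat.zero_div, Nat.choose_zero_right,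
      hm]
    push_cast
    rw [div_self (show (k:ℚ) ≠ 0 by positivity), mul_one]
  · by_cases hdvd : t ∣ (m - k)
    · obtain ⟨n, hn⟩ := hdvd
      have hn1 : 1 ≤ n := by
        rcases Nat.eq_zero_or_pos n with h | h
        · rw [h, Nat.mul_zero] at hn; omega
        · exact h
      have hval : ∀ i, sqc t (t*i) (m-k)
          = if i ≤ n then (i : ℚ)/(n:ℚ) * (((t*n).choose (n - i) : ℕ) : ℚ) else 0 := by
        intro i
        simp only [sqc, hn, if_neg (Nat.mul_ne_zero (by omega) (by omega) : ¬ (t*n = 0) )]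
        by_cases hin : i ≤ n
        · rw [if_pos ⟨Nat.mul_le_mul le_rfl hin,
              by rw [← Nat.mul_sub]; exact dvd_mul_right t (n-i)⟩, if_pos hin]
          rw [← Nat.mul_sub, Nat.mul_div_cancel_left _ ht0]
          congr 1
          push_cast
          rw [mul_div_mul_left _ _ (show (t:ℚ) ≠ 0 by positivity)]
        · rw [if_neg, if_neg hin]
          rintro ⟨h1, -⟩
          exact hin (Nat.le_of_mul_le_mul_left h1 ht0)
      simp only [hval]
      have hnat := sq11_natkey (t*n) k n hk hn1
      have hcast := congrArg (Nat.cast : ℕ → ℚ) hnat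
      push_cast at hcast
      have hstep : ∑ i ∈ Finset.range (k+1),
          (k.choose i : ℚ) * (if i ≤ n then (i : ℚ)/(n:ℚ) * (((t*n).choose (n - i) : ℕ) : ℚ) else 0)
          = (1/(n:ℚ)) * ((k : ℚ) * (((k - 1 + t*n).choose (n - 1) : ℕ) : ℚ)) := by
        rw [← hcast, Finset.mul_sum]
        apply Finset.sum_congr rfl
        intro i _
        by_cases hin : i ≤ n
        · rw [if_pos hin, if_pos hin]; ring
        · rw [if_neg hin, if_neg hin]; ring
      rw [hstep]
      have hm0 : m ≠ 0 := by omega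
      rw [sqc, if_neg hm0, if_pos ⟨hkm, hn ▸ dvd_mul_right t n⟩, hn,
        Nat.mul_div_cancel_left _ ht0]
      have hmkn : m = k + t*n := by omega
      have hid := Nat.add_one_mul_choose_eq (m-1) (n-1)
      simp only [Nat.succ_eq_add_one, Nat.sub_add_cancel (show 1 ≤ m by omega),
        Nat.sub_add_cancel hn1] at hid
      have hm1 : m - 1 = k - 1 + t*n := by omega
      rw [hm1] at hid
      have hidq := congrArg (Nat.cast : ℕ → ℚ) hid
      push_cast at hidq
      have hmq : (m:ℚ) ≠ 0 := by positivity
      have hnq : (n:ℚ) ≠ 0 := by positivity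
      rw [hmkn] at hidq ⊢
      push_cast at hidq ⊢
      field_simp
      linear_combination hidq
    · have hval : ∀ i ∈ Finset.range (k+1), (k.choose i : ℚ) * sqc t (t*i) (m-k) = 0 := by
        intro i _
        simp only [sqc, if_neg hr0]
        rw [if_neg, mul_zero]
        rintro ⟨h1, h2⟩
        apply hdvd
        have h3 : m - k = (m - k - t*i) + t*i := by omega
        rw [h3]
        exact Nat.dvd_add h2 (dvd_mul_right t i)
      rw [Finset.sum_congr rfl hval, Finset.sum_const_zero]
      rw [sqc, if_neg (by omega), if_neg (fun h => hdvd h.2)]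



lemma sq11_agree_pow (f g : PowerSeries ℚ) (n : ℕ)
    (h : ∀ j ≤ n, coeff j f = coeff j g) (s : ℕ) :
    ∀ j ≤ n, coeff j (f^s) = coeff j (g^s) := by
  induction s with
  | zero => intro j _; rfl
  | succ s ihs =>
    intro j hj
    rw [pow_succ, pow_succ, coeff_mul, coeff_mul]
    apply Finset.sum_congr rfl
    intro p hp
    rw [Finset.HasAntidiagonal.mem_antidiagonal] at hp
    rw [ihs p.1 (by omega), h p.2 (by omega)]

noncomputable def sq11seq (t : ℕ) : ℕ → PowerSeries ℚ
  | 0 => 0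
  | n+1 => X + X * (sq11seq t n)^t

lemma sq11seq_stab (t : ℕ) :
    ∀ n, ∀ m ≤ n, coeff m (sq11seq t (n+1)) = coeff m (sq11seq t n) := by
  intro n
  induction n with
  | zero =>
    intro m hm
    interval_cases m
    show coeff 0 (X + X * (0:PowerSeries ℚ)^t) = coeff 0 0
    simp
  | succ n ihn =>
    intro m hm
    show coeff m (X + X * (sq11seq t (n+1))^t) = coeff m (X + X * (sq11seq t n)^t)
    rcases Nat.eq_zero_or_pos m with h0 | h0
    · subst h0
      simp
    · obtain ⟨m', rfl⟩ : ∃ m', m = m' + 1 := ⟨m-1, by omega⟩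
      rw [map_add, map_add, coeff_succ_X_mul, coeff_succ_X_mul,
        sq11_agree_pow _ _ n ihn t m' (by omega)]

lemma sq11seq_stab' (t : ℕ) {m n n' : ℕ} (h : m ≤ n) (h' : n ≤ n') :
    coeff m (sq11seq t n') = coeff m (sq11seq t n) := by
  obtain ⟨d, rfl⟩ := Nat.exists_eq_add_of_le h'
  induction d with
  | zero => rfl
  | succ d ihd =>
    rw [show n + (d+1) = (n+d) + 1 from rfl, sq11seq_stab t (n+d) m (by omega), ihd (by omega)]

noncomputable def sq11Y (t : ℕ) : PowerSeries ℚ :=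
  PowerSeries.mk fun m => coeff m (sq11seq t m)

lemma sq11Y_coeff (t : ℕ) {m n : ℕ} (h : m ≤ n) :
    coeff m (sq11Y t) = coeff m (sq11seq t n) := by
  rw [sq11Y, coeff_mk, sq11seq_stab' t (le_refl m) h]

lemma sq11Y_spec (t : ℕ) : sq11Y t = X + X * (sq11Y t)^t := by
  ext m
  have h1 : coeff m (sq11Y t) = coeff m (sq11seq t (m+1)) := sq11Y_coeff t (by omega)
  rw [h1]
  show coeff m (X + X * (sq11seq t m)^t) = coeff m (X + X * (sq11Y t)^t)
  rcases Nat.eq_zero_or_pos m with h0 | h0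
  · subst h0; simp
  · obtain ⟨m', rfl⟩ : ∃ m', m = m' + 1 := ⟨m-1, by omega⟩
    rw [map_add, map_add, coeff_succ_X_mul, coeff_succ_X_mul,
      sq11_agree_pow (sq11seq t (m'+1)) (sq11Y t) m'
        (fun j hj => (sq11Y_coeff t (show j ≤ m'+1 by omega)).symm) t m' le_rfl]

lemma sq11Y_const (t : ℕ) : constantCoeff (sq11Y t) = 0 := by
  rw [← coeff_zero_eq_constantCoeff_apply, sq11Y_coeff t (le_refl 0)]
  rfl


lemma sqc_pow (t : ℕ) (ht : 2 ≤ t) (Y : PowerSeries ℚ) (hY : Y = X + X * Y^t) :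
    ∀ m k, coeff m (Y^k) = sqc t k m := by
  have hXdvd : X ∣ Y := ⟨1 + Y^t, by linear_combination hY⟩
  intro m
  induction m using Nat.strong_induction_on with
  | _ m ih =>
    intro k
    rcases Nat.eq_zero_or_pos k with hk0 | hk1
    · subst hk0
      rw [pow_zero, coeff_one]
      rcases Nat.eq_zero_or_pos m with h0 | h0
      · subst h0; simp [sqc]
      · rw [if_neg (by omega), sqc, if_neg (by omega)]
        by_cases h : 0 ≤ m ∧ t ∣ (m - 0)
        · rw [if_pos h]; simp
        · rw [if_neg h]
    · by_cases hkm : k ≤ m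
      · -- main case
        have hpow : Y^k = X^k * (∑ i ∈ Finset.range (k+1), Y^(t*i) * ((k.choose i : ℕ) : PowerSeries ℚ)) := by
          calc Y^k = (X * (1 + Y^t))^k := by rw [← (show X + X*Y^t = X*(1+Y^t) by ring), ← hY]
          _ = X^k * ((Y^t + 1))^k := by rw [mul_pow]; ring_nf
          _ = X^k * (∑ i ∈ Finset.range (k+1), (Y^t)^i * 1^(k-i) * ((k.choose i : ℕ) : PowerSeries ℚ)) := by
              rw [add_pow]
          _ = _ := by
              congr 1
              apply Finset.sum_congr rfl
              intro i _
              rw [one_pow, mul_one, ← pow_mul]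
        rw [hpow, coeff_X_pow_mul', if_pos hkm, map_sum]
        have hterm : ∀ i ∈ Finset.range (k+1),
            coeff (m-k) (Y^(t*i) * ((k.choose i : ℕ) : PowerSeries ℚ))
            = (k.choose i : ℚ) * sqc t (t*i) (m-k) := by
          intro i _
          rw [mul_comm, show ((k.choose i : ℕ) : PowerSeries ℚ) = C ((k.choose i : ℕ) : ℚ) from by push_cast; rfl,
            coeff_C_mul, ih (m-k) (by omega) (t*i)]
        rw [Finset.sum_congr rfl hterm, sq11_sum t k m ht hk1 hkm]
      · -- m < k : coefficient zero
        have h1 : (X:PowerSeries ℚ)^k ∣ Y^k := pow_dvd_pow_of_dvd hXdvd k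
        rw [X_pow_dvd_iff.mp h1 m (by omega), sqc]
        rcases Nat.eq_zero_or_pos m with h0 | h0
        · subst h0; rw [if_pos rfl, if_neg (by omega)]
        · rw [if_neg (by omega), if_neg (by tauto)]


lemma sq11_unique (t : ℕ) (ht : 2 ≤ t) (Y₁ Y₂ : PowerSeries ℚ)
    (e1 : Y₁ = X + X * Y₁^t) (e2 : Y₂ = X + X * Y₂^t) : Y₁ = Y₂ := by
  have hgeom := geom_sum₂_mul Y₁ Y₂ t
  set G : PowerSeries ℚ := ∑ i ∈ Finset.range t, Y₁^i * Y₂^(t-1-i) with hG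
  have key : (Y₁ - Y₂) * (1 - X * G) = 0 := by linear_combination e1 - e2 - X * hgeom
  have hne : (1 - X * G : PowerSeries ℚ) ≠ 0 := by
    intro h
    have := congrArg (constantCoeff) h
    simp [map_sub, map_mul] at this
  rcases mul_eq_zero.mp key with h | h
  · exact sub_eq_zero.mp h
  · exact absurd h hne

lemma sq11_S (t : ℕ) (ht : 2 ≤ t) (Y : PowerSeries ℚ) (hY : Y = X + X * Y^t) :
    ((t:ℕ) : PowerSeries ℚ) * (PowerSeries.mk (fun k => if t ∣ k then ((k.choose (k / t) : ℚ)) else 0))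
      = ((t:ℕ) : PowerSeries ℚ) + ((t:ℕ) : PowerSeries ℚ) * Y^t
        + ((t - 1 : ℕ) : PowerSeries ℚ) * (X * (d⁄dX ℚ (Y^t))) := by
  have ht0 : (0:ℕ) < t := by omega
  ext m
  rw [show ((t:ℕ) : PowerSeries ℚ) = C ((t:ℕ):ℚ) from (map_natCast C t).symm,
      show ((t-1:ℕ) : PowerSeries ℚ) = C ((t-1:ℕ):ℚ) from (map_natCast C (t-1)).symm]
  rw [map_add, map_add, coeff_C_mul, coeff_C_mul, coeff_C_mul, coeff_mk, coeff_C,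
      sqc_pow t ht Y hY m t]
  rcases Nat.eq_zero_or_pos m with h0 | h0
  · subst h0
    rw [if_pos (dvd_zero t), if_pos rfl]
    have h1 : coeff 0 (X * (d⁄dX ℚ (Y^t))) = 0 := by
      rw [coeff_zero_eq_constantCoeff_apply, map_mul, constantCoeff_X, zero_mul]
    rw [h1, show sqc t t 0 = 0 from by rw [sqc, if_pos rfl, if_neg (by omega)]]
    norm_num
  · obtain ⟨m', hm'⟩ : ∃ m', m = m' + 1 := ⟨m-1, by omega⟩
    rw [if_neg (show ¬ m = 0 by omega)]
    have h2 : coeff m (X * (d⁄dX ℚ (Y^t))) = (m:ℚ) * sqc t t m := by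
      rw [hm', coeff_succ_X_mul, coeff_derivative, sqc_pow t ht Y hY (m'+1) t, ← hm']
      have hq : ((m':ℚ)+1) = (m:ℚ) := by rw [hm']; push_cast; ring
      rw [hq]
      ring
    rw [h2]
    by_cases hdvd : t ∣ m
    · obtain ⟨n, hn⟩ := hdvd
      have hn1 : 1 ≤ n := by
        rcases Nat.eq_zero_or_pos n with h | h
        · rw [h, Nat.mul_zero] at hn; omega
        · exact h
      have htm : t ≤ m := by rw [hn]; exact Nat.le_mul_of_pos_right t hn1
      have hmt : m - t = t * (n - 1) := by rw [hn, Nat.mul_sub, Nat.mul_one]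
      have hdd : t ∣ m - t := hmt ▸ dvd_mul_right t (n-1)
      have hsub : (m - t)/t = n - 1 := by rw [hmt, Nat.mul_div_cancel_left _ ht0]
      have hval : sqc t t m = (t:ℚ)/((t*n : ℕ):ℚ) * (((t*n).choose (n-1) : ℕ):ℚ) := by
        rw [sqc, if_neg (by omega), if_pos ⟨htm, hdd⟩, hsub, hn]
      rw [if_pos ⟨n, hn⟩, hval, hn, Nat.mul_div_cancel_left _ ht0]
      -- rational identity
      have hid := Nat.choose_succ_right_eq (t*n) (n-1)
      rw [Nat.sub_add_cancel hn1] at hid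
      have hle : n ≤ t*n := Nat.le_mul_of_pos_left n ht0
      have hsub2 : t*n - (n-1) = t*n - n + 1 := by omega
      rw [hsub2] at hid
      have hidq := congrArg (Nat.cast : ℕ → ℚ) hid
      push_cast [Nat.cast_sub hle, Nat.cast_sub (show 1 ≤ t by omega)] at hidq ⊢
      have hnq : (n:ℚ) ≠ 0 := by positivity
      have htq : (t:ℚ) ≠ 0 := by positivity
      field_simp
      linear_combination (t:ℚ) * hidq
    · rw [if_neg hdvd, show sqc t t m = 0 from by
        rw [sqc, if_neg (by omega), if_neg (by
          rintro ⟨h1, hd2⟩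
          exact hdvd (by
            have h3 : m = (m - t) + t := by omega
            rw [h3]
            exact Nat.dvd_add hd2 (dvd_refl t)))]]
      ring


/-- Lagrange-inversion identity for the generalized square-root construction.
In `ℚ⟦z⟧`, there is a unique power series `Y` with zero constant term such that
`Y = z + z Y^t`, and for it `(1 - t z Y^{t-1}) · ∑_{n≥0} binom(tn,n) z^{tn} = 1`. -/
theorem stmt11 (t : ℕ) (ht : 2 ≤ t) :
    (∃! Y : PowerSeries ℚ, constantCoeff Y = 0 ∧ Y = X + X * Y ^ t) ∧
    ∀ Y : PowerSeries ℚ, constantCoeff Y = 0 → Y = X + X * Y ^ t →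
      (1 - (t : PowerSeries ℚ) * X * Y ^ (t - 1)) *
          PowerSeries.mk (fun k => if t ∣ k then ((k.choose (k / t) : ℚ)) else 0)
        = 1 := by
  constructor
  · exact ⟨sq11Y t, ⟨sq11Y_const t, sq11Y_spec t⟩,
      fun Z hZ => sq11_unique t ht Z (sq11Y t) hZ.2 (sq11Y_spec t)⟩
  · intro Y h0 hY
    set S : PowerSeries ℚ :=
      PowerSeries.mk (fun k => if t ∣ k then ((k.choose (k / t) : ℚ)) else 0) with hSdef
    have hS := sq11_S t ht Y hY
    rw [← hSdef] at hS
    have hd : d⁄dX ℚ Y = 1 + Y^t + X * (d⁄dX ℚ (Y^t)) := by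
      conv_lhs => rw [hY]
      rw [map_add, Derivation.leibniz, smul_eq_mul, smul_eq_mul, derivative_X, mul_one]
      ring
    have hpow : d⁄dX ℚ (Y^t) = ((t:ℕ) : PowerSeries ℚ) * (Y^(t-1) * d⁄dX ℚ Y) := by
      rw [Derivation.leibniz_pow, smul_eq_mul, nsmul_eq_mul]
    have hYt1 : Y^t = Y^(t-1) * Y := by
      rw [← pow_succ, Nat.sub_add_cancel (show 1 ≤ t by omega)]
    have hc : ((t-1:ℕ) : PowerSeries ℚ) = ((t:ℕ) : PowerSeries ℚ) - 1 := by
      rw [Nat.cast_sub (show 1 ≤ t by omega), Nat.cast_one]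
    rw [hpow, hc] at hS
    rw [hpow] at hd
    set τ : PowerSeries ℚ := ((t:ℕ) : PowerSeries ℚ) with hτ
    set u : PowerSeries ℚ := Y^(t-1) with hu
    set v : PowerSeries ℚ := Y^t with hv
    set dY : PowerSeries ℚ := d⁄dX ℚ Y with hdY
    -- cancel τ * X
    have htX : (τ * X : PowerSeries ℚ) ≠ 0 := by
      apply mul_ne_zero
      · intro h
        have := congrArg (constantCoeff) h
        rw [hτ] at this
        simp at this
        omega
      · exact X_ne_zero
    apply mul_left_cancel₀ htX
    rw [mul_one]
    have h1 : (1 - τ*X*u) * dY = 1 + v := by linear_combination hd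
    have h2 : X * (1 + v) = Y := by linear_combination -hY
    calc τ*X*((1 - τ*X*u)*S) = X*(1-τ*X*u)*(τ*S) := by ring
      _ = X*(1-τ*X*u)*(τ + τ*v + (τ-1)*(X*(τ*(u*dY)))) := by rw [hS]
      _ = τ*(X*(1+v)) - τ*τ*X*u*(X*(1+v)) + (τ-1)*τ*X*u*(X*((1 - τ*X*u)*dY)) := by ring
      _ = τ*(X*(1+v)) - τ*τ*X*u*(X*(1+v)) + (τ-1)*τ*X*u*(X*(1+v)) := by rw [h1]
      _ = τ*Y - τ*τ*X*u*Y + (τ-1)*τ*X*u*Y := by rw [h2]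
      _ = τ*Y - τ*X*(u*Y) := by ring
      _ = τ*Y - τ*X*v := by rw [hv, hu, ← hYt1]
      _ = τ*X := by linear_combination τ*hY
end

section
/- Distribution of T in the Rama procedure. Let X₁ and X₂ be independent random variables, each with the geometric distribution P(X = k) = (3/4)·(1/4)^k on ℕ, and let B be a Bernoulli random variable independent of X₁, X₂ with P(B = 1) = 5/9. Then T := X₁ + X₂ + B satisfies P(T = n) = (6n+1)/4^{n+1} for every n ∈ ℕ. -/
open MeasureTheory ProbabilityTheory
open scoped ENNReal

/-- Distribution of `T` in the Rama procedure.  If `X₁, X₂` are independent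
geometric variables with `P(X = k) = (3/4)(1/4)^k`, and `B` is an independent
Bernoulli variable with `P(B = 1) = 5/9`, then `T = X₁ + X₂ + B` satisfies
`P(T = n) = (6n+1)/4^{n+1}` for every `n ∈ ℕ`. -/
theorem stmt13 {Ω : Type*} [MeasurableSpace Ω] (μ : Measure Ω) [IsProbabilityMeasure μ]
    (X₁ X₂ B : Ω → ℕ)
    (h1 : Measurable X₁) (h2 : Measurable X₂) (hBm : Measurable B)
    (hindep : iIndepFun ![X₁, X₂, B] μ)
    (hX1 : ∀ k : ℕ, μ {ω | X₁ ω = k} = ENNReal.ofReal ((3 / 4) * (1 / 4) ^ k))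
    (hX2 : ∀ k : ℕ, μ {ω | X₂ ω = k} = ENNReal.ofReal ((3 / 4) * (1 / 4) ^ k))
    (hB01 : ∀ ω, B ω = 0 ∨ B ω = 1)
    (hB1 : μ {ω | B ω = 1} = ENNReal.ofReal (5 / 9)) :
    ∀ n : ℕ, μ {ω | X₁ ω + X₂ ω + B ω = n}
      = ENNReal.ofReal ((6 * (n : ℝ) + 1) / 4 ^ (n + 1)) := by
  -- probability B = 0
  have hB0 : μ {ω | B ω = 0} = ENNReal.ofReal (4 / 9) := by
    have hc : {ω | B ω = 0} = {ω | B ω = 1}ᶜ := by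
      ext ω; simp only [Set.mem_setOf_eq, Set.mem_compl_iff]
      rcases hB01 ω with h | h <;> simp [h]
    have hm := measure_compl (μ := μ) (s := {ω | B ω = 1})
      (hBm (measurableSet_singleton 1)) (measure_ne_top μ _)
    rw [hc, hm, hB1, measure_univ]
    rw [show (1 : ℝ≥0∞) = ENNReal.ofReal 1 by simp, ← ENNReal.ofReal_sub _ (by norm_num)]
    norm_num
  -- triple independence
  have key : ∀ i j b : ℕ, μ ({ω | X₁ ω = i} ∩ {ω | X₂ ω = j} ∩ {ω | B ω = b})
      = μ {ω | X₁ ω = i} * μ {ω | X₂ ω = j} * μ {ω | B ω = b} := by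
    intro i j b
    have := hindep.meas_iInter (s := ![X₁ ⁻¹' {i}, X₂ ⁻¹' {j}, B ⁻¹' {b}]) ?_
    · have hInter : (⋂ k, ![X₁ ⁻¹' {i}, X₂ ⁻¹' {j}, B ⁻¹' {b}] k)
          = {ω | X₁ ω = i} ∩ {ω | X₂ ω = j} ∩ {ω | B ω = b} := by
        ext ω
        simp [Fin.forall_fin_succ, Set.mem_iInter, and_assoc]
      rw [hInter] at this
      rw [this, Fin.prod_univ_three]
      rfl
    · intro k
      fin_cases k
      · exact ⟨{i}, measurableSet_singleton i, rfl⟩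
      · exact ⟨{j}, measurableSet_singleton j, rfl⟩
      · exact ⟨{b}, measurableSet_singleton b, rfl⟩
  -- sum over X₁ values
  have L1 : ∀ m b : ℕ, μ ({ω | X₁ ω + X₂ ω = m} ∩ {ω | B ω = b})
      = (m + 1 : ℕ) * ENNReal.ofReal ((9 / 16) * (1 / 4) ^ m) * μ {ω | B ω = b} := by
    intro m b
    have hset : {ω | X₁ ω + X₂ ω = m} ∩ {ω | B ω = b}
        = ⋃ i ∈ Finset.range (m + 1),
            ({ω | X₁ ω = i} ∩ {ω | X₂ ω = m - i} ∩ {ω | B ω = b}) := by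
      ext ω
      simp only [Set.mem_inter_iff, Set.mem_setOf_eq, Set.mem_iUnion, Finset.mem_range]
      constructor
      · rintro ⟨h, hb⟩
        exact ⟨X₁ ω, by omega, ⟨by omega, by omega⟩, hb⟩
      · rintro ⟨i, hi, ⟨h1', h2'⟩, hb⟩
        exact ⟨by omega, hb⟩
    rw [hset, measure_biUnion_finset]
    · have hterm : ∀ i ∈ Finset.range (m + 1),
          μ ({ω | X₁ ω = i} ∩ {ω | X₂ ω = m - i} ∩ {ω | B ω = b})
            = ENNReal.ofReal ((9 / 16) * (1 / 4) ^ m) * μ {ω | B ω = b} := by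
        intro i hi
        rw [key, hX1, hX2, ← ENNReal.ofReal_mul (by positivity)]
        congr 2
        rw [Finset.mem_range] at hi
        have h4 : (1/4:ℝ) ^ i * (1/4) ^ (m - i) = (1/4) ^ m := by
          rw [← pow_add]; congr 1; omega
        linear_combination (9/16 : ℝ) * h4
      rw [Finset.sum_congr rfl hterm, Finset.sum_const, Finset.card_range, nsmul_eq_mul,
        mul_assoc]
    · intro i hi j hj hij
      simp only [Function.onFun, Set.disjoint_left]
      rintro ω ⟨⟨hωi, -⟩, -⟩ ⟨⟨hωj, -⟩, -⟩
      exact hij (hωi ▸ hωj ▸ rfl)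
    · intro i hi
      exact ((h1 (measurableSet_singleton i)).inter
        (h2 (measurableSet_singleton (m - i)))).inter (hBm (measurableSet_singleton b))
  intro n
  match n with
  | 0 =>
    have hset : {ω | X₁ ω + X₂ ω + B ω = 0}
        = {ω | X₁ ω + X₂ ω = 0} ∩ {ω | B ω = 0} := by
      ext ω; simp only [Set.mem_inter_iff, Set.mem_setOf_eq]; omega
    rw [hset, L1, hB0, ← ENNReal.ofReal_natCast (0+1),
      ← ENNReal.ofReal_mul (by positivity), ← ENNReal.ofReal_mul (by positivity)]
    norm_num
  | Nat.succ k =>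
    have hset : {ω | X₁ ω + X₂ ω + B ω = k + 1}
        = ({ω | X₁ ω + X₂ ω = k + 1} ∩ {ω | B ω = 0})
          ∪ ({ω | X₁ ω + X₂ ω = k} ∩ {ω | B ω = 1}) := by
      ext ω
      simp only [Set.mem_union, Set.mem_inter_iff, Set.mem_setOf_eq]
      rcases hB01 ω with h | h <;> simp [h] <;> try omega
    have hdisj : Disjoint ({ω | X₁ ω + X₂ ω = k + 1} ∩ {ω | B ω = 0})
        ({ω | X₁ ω + X₂ ω = k} ∩ {ω | B ω = 1}) := by
      simp only [Set.disjoint_left]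
      rintro ω ⟨-, h0⟩ ⟨-, h1'⟩
      simp only [Set.mem_setOf_eq] at h0 h1'
      omega
    have hmeas : MeasurableSet ({ω | X₁ ω + X₂ ω = k} ∩ {ω | B ω = 1}) :=
      ((h1.add h2) (measurableSet_singleton k)).inter (hBm (measurableSet_singleton 1))
    rw [hset, measure_union hdisj hmeas, L1, L1, hB0, hB1,
      ← ENNReal.ofReal_natCast (k+1+1), ← ENNReal.ofReal_natCast (k+1),
      ← ENNReal.ofReal_mul (by positivity), ← ENNReal.ofReal_mul (by positivity),
      ← ENNReal.ofReal_mul (by positivity), ← ENNReal.ofReal_mul (by positivity),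
      ← ENNReal.ofReal_add (by positivity) (by positivity)]
    congr 1
    push_cast
    field_simp
    have h4 : (1/4:ℝ)^k * 4^k.succ = 4 := by
      rw [pow_succ, ← mul_assoc, ← mul_pow]; norm_num
    linear_combination ((k:ℝ)*24 + 28) * h4
end

section
/- Expected path length of a random trie. Let n ≥ 2 and let X₁,…,Xₙ be independent random infinite binary strings, each with independent uniform {0,1} bits (i.e. each Xᵢ is uniform on {0,1}^ℕ under the product of Bernoulli(1/2) measures). For each i, let Dᵢ := min{ℓ ∈ ℕ : for all j ≠ i, the first ℓ bits of Xᵢ differ as a vector from the first ℓ bits of Xⱼ} (the depth of key i in the trie built from X₁,…,Xₙ, i.e. the number of bits of Xᵢ examined). Then each Dᵢ is almost surely finite and the expected path length satisfies E[D₁ + ⋯ + Dₙ] = n·∑_{k=0}^{∞} [1 − (1 − 2^{−k})^{n−1}]; in particular this expectation is finite. -/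
open MeasureTheory ProbabilityTheory
open scoped ENNReal

section Aux

variable {Ω : Type*} [MeasurableSpace Ω] {μ : Measure Ω} [IsProbabilityMeasure μ]
  {n : ℕ} {X : Fin n → Ω → ℕ → Bool}

lemma trie_bit (hmeas : ∀ (i : Fin n) (k : ℕ), Measurable fun ω => X i ω k)
    (hfair : ∀ (i : Fin n) (k : ℕ), μ {ω | X i ω k = true} = 1 / 2)
    (j : Fin n) (m : ℕ) (b : Bool) : μ {ω | X j ω m = b} = 2⁻¹ := by
  cases b
  · have h1 : {ω | X j ω m = false} = {ω | X j ω m = true}ᶜ := by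
      ext ω; simp
    have h2 : MeasurableSet {ω | X j ω m = true} :=
      (hmeas j m) (measurableSet_singleton true)
    rw [h1, measure_compl h2 (measure_ne_top μ _), hfair]
    rw [measure_univ, one_div, ENNReal.one_sub_inv_two]
  · rw [hfair, one_div]

lemma trie_atom
    (hindep : iIndepFun
      (fun p : Fin n × ℕ => fun ω => X p.1 ω p.2) μ)
    (hmeas : ∀ (i : Fin n) (k : ℕ), Measurable fun ω => X i ω k)
    (hfair : ∀ (i : Fin n) (k : ℕ), μ {ω | X i ω k = true} = 1 / 2)
    (k : ℕ) (w : Fin n → Fin k → Bool) :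
    μ {ω | ∀ (j : Fin n) (m : Fin k), X j ω (m : ℕ) = w j m} = 2⁻¹ ^ (n * k) := by
  classical
  set S : Finset (Fin n × ℕ) := (Finset.univ : Finset (Fin n × Fin k)).image
      (fun p => (p.1, (p.2 : ℕ))) with hS
  set sets : ∀ _ : Fin n × ℕ, Set Bool := fun p =>
      if h : p.2 < k then {w p.1 ⟨p.2, h⟩} else Set.univ with hsets
  have hprod := hindep.measure_inter_preimage_eq_mul S (sets := sets)
      (fun i _ => trivial)
  have hset : (⋂ p ∈ S, (fun p : Fin n × ℕ => fun ω => X p.1 ω p.2) p ⁻¹' sets p)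
      = {ω | ∀ (j : Fin n) (m : Fin k), X j ω (m : ℕ) = w j m} := by
    ext ω
    simp only [Set.mem_iInter, Set.mem_preimage, hS, Finset.mem_image, Finset.mem_univ,
      true_and, Set.mem_setOf_eq]
    constructor
    · intro h j m
      have := h (j, (m : ℕ)) ⟨(j, m), rfl⟩
      simpa [hsets, m.isLt] using this
    · rintro h p ⟨⟨j, m⟩, rfl⟩
      simpa [hsets, m.isLt] using h j m
  rw [hset] at hprod
  rw [hprod]
  have hinj : Function.Injective (fun p : Fin n × Fin k => (p.1, (p.2 : ℕ))) := by
    intro p q h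
    simp only [Prod.mk.injEq] at h
    exact Prod.ext h.1 (Fin.val_injective h.2)
  have hcard : S.card = n * k := by
    rw [hS, Finset.card_image_of_injective _ hinj, Finset.card_univ, Fintype.card_prod,
      Fintype.card_fin, Fintype.card_fin]
  have : ∀ p ∈ S, μ ((fun p : Fin n × ℕ => fun ω => X p.1 ω p.2) p ⁻¹' sets p) = 2⁻¹ := by
    rintro p hp
    rw [hS, Finset.mem_image] at hp
    obtain ⟨⟨j, m⟩, -, rfl⟩ := hp
    have : sets (j, (m : ℕ)) = {w j m} := by simp [hsets, m.isLt]
    rw [this]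
    exact trie_bit hmeas hfair j m (w j m)
  rw [Finset.prod_congr rfl this, Finset.prod_const, hcard]

lemma trie_cyl_eq (k : ℕ) (E : Fin n → Finset (Fin k → Bool)) :
    {ω : Ω | ∀ j : Fin n, (fun m : Fin k => X j ω (m : ℕ)) ∈ E j}
      = ⋃ g ∈ Fintype.piFinset E, {ω | ∀ (j : Fin n) (m : Fin k), X j ω (m : ℕ) = g j m} := by
  classical
  ext ω
  simp only [Set.mem_setOf_eq, Set.mem_iUnion, Fintype.mem_piFinset, exists_prop]
  constructor
  · intro h
    exact ⟨fun j m => X j ω (m : ℕ), h, fun j m => rfl⟩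
  · rintro ⟨g, hg, hw⟩ j
    have : (fun m : Fin k => X j ω (m : ℕ)) = g j := funext (hw j)
    rw [this]; exact hg j

lemma trie_atom_measurable
    (hmeas : ∀ (i : Fin n) (k : ℕ), Measurable fun ω => X i ω k)
    (k : ℕ) (g : Fin n → Fin k → Bool) :
    MeasurableSet {ω : Ω | ∀ (j : Fin n) (m : Fin k), X j ω (m : ℕ) = g j m} := by
  have : {ω : Ω | ∀ (j : Fin n) (m : Fin k), X j ω (m : ℕ) = g j m}
      = ⋂ (j : Fin n), ⋂ (m : Fin k), (fun ω => X j ω (m : ℕ)) ⁻¹' {g j m} := by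
    ext ω; simp [Set.mem_iInter]
  rw [this]
  exact MeasurableSet.iInter fun j => MeasurableSet.iInter fun m =>
    (hmeas j (m : ℕ)) (measurableSet_singleton _)

lemma trie_cyl_measurable
    (hmeas : ∀ (i : Fin n) (k : ℕ), Measurable fun ω => X i ω k)
    (k : ℕ) (E : Fin n → Finset (Fin k → Bool)) :
    MeasurableSet {ω : Ω | ∀ j : Fin n, (fun m : Fin k => X j ω (m : ℕ)) ∈ E j} := by
  classical
  rw [trie_cyl_eq k E]
  exact (Fintype.piFinset E).measurableSet_biUnion
    (fun g _ => trie_atom_measurable hmeas k g)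

lemma trie_rect
    (hindep : iIndepFun
      (fun p : Fin n × ℕ => fun ω => X p.1 ω p.2) μ)
    (hmeas : ∀ (i : Fin n) (k : ℕ), Measurable fun ω => X i ω k)
    (hfair : ∀ (i : Fin n) (k : ℕ), μ {ω | X i ω k = true} = 1 / 2)
    (k : ℕ) (E : Fin n → Finset (Fin k → Bool)) :
    μ {ω | ∀ j : Fin n, (fun m : Fin k => X j ω (m : ℕ)) ∈ E j}
      = ∏ j : Fin n, (((E j).card : ℝ≥0∞) * 2⁻¹ ^ k) := by
  classical
  rw [trie_cyl_eq k E,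
    measure_biUnion_finset ?disj (fun g _ => trie_atom_measurable hmeas k g)]
  case disj =>
    intro g hg g' hg' hne
    rw [Function.onFun, Set.disjoint_left]
    intro ω hω hω'
    exact hne (funext fun j => funext fun m => (hω j m).symm.trans (hω' j m))
  rw [Finset.sum_congr rfl (fun g _ => trie_atom hindep hmeas hfair k g),
    Finset.sum_const, Fintype.card_piFinset, nsmul_eq_mul, Nat.cast_prod]
  rw [Finset.prod_mul_distrib, Finset.prod_const, Finset.card_univ, Fintype.card_fin, ← pow_mul,
    mul_comm k n]

lemma trie_C
    (hindep : iIndepFun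
      (fun p : Fin n × ℕ => fun ω => X p.1 ω p.2) μ)
    (hmeas : ∀ (i : Fin n) (k : ℕ), Measurable fun ω => X i ω k)
    (hfair : ∀ (i : Fin n) (k : ℕ), μ {ω | X i ω k = true} = 1 / 2)
    (i : Fin n) (k : ℕ) :
    μ {ω | ∀ j, j ≠ i → ∃ m < k, X i ω m ≠ X j ω m}
      = ENNReal.ofReal ((1 - ((1 : ℝ) / 2) ^ k) ^ (n - 1)) := by
  classical
  set E : (Fin k → Bool) → Fin n → Finset (Fin k → Bool) :=
    fun v j => if j = i then {v} else {v}ᶜ with hE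
  have hunion : {ω | ∀ j, j ≠ i → ∃ m < k, X i ω m ≠ X j ω m}
      = ⋃ v : Fin k → Bool, {ω | ∀ j : Fin n, (fun m : Fin k => X j ω (m : ℕ)) ∈ E v j} := by
    ext ω
    simp only [Set.mem_setOf_eq, Set.mem_iUnion]
    constructor
    · intro h
      refine ⟨fun m => X i ω (m : ℕ), fun j => ?_⟩
      by_cases hji : j = i
      · subst hji; simp [hE]
      · obtain ⟨m, hm, hne⟩ := h j hji
        simp only [hE, if_neg hji, Finset.mem_compl, Finset.mem_singleton]
        intro hcontra
        exact hne (congrFun hcontra ⟨m, hm⟩).symm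
    · rintro ⟨v, hv⟩ j hji
      have hvi : (fun m : Fin k => X i ω (m : ℕ)) = v := by
        have := hv i; simpa [hE] using this
      have hvj := hv j
      simp only [hE, if_neg hji, Finset.mem_compl, Finset.mem_singleton] at hvj
      rw [← hvi] at hvj
      obtain ⟨m, hm⟩ := Function.ne_iff.mp hvj
      exact ⟨(m : ℕ), m.isLt, fun h => hm (by
        have : X j ω (m : ℕ) = X i ω (m : ℕ) := h.symm
        simp [this])⟩
  rw [hunion, measure_iUnion ?disj ?meas]
  case disj =>
    intro v v' hne
    rw [Function.onFun, Set.disjoint_left]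
    intro ω hω hω'
    have h1 : (fun m : Fin k => X i ω (m : ℕ)) = v := by
      have := hω i; simpa [hE] using this
    have h2 : (fun m : Fin k => X i ω (m : ℕ)) = v' := by
      have := hω' i; simpa [hE] using this
    exact hne (h1 ▸ h2)
  case meas =>
    exact fun v => trie_cyl_measurable hmeas k (E v)
  have hterm : ∀ v : Fin k → Bool,
      μ {ω | ∀ j : Fin n, (fun m : Fin k => X j ω (m : ℕ)) ∈ E v j}
        = 2⁻¹ ^ k * (((2 ^ k - 1 : ℕ) : ℝ≥0∞) * 2⁻¹ ^ k) ^ (n - 1) := by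
    intro v
    rw [trie_rect hindep hmeas hfair k (E v)]
    rw [← Finset.mul_prod_erase Finset.univ _ (Finset.mem_univ i)]
    have h1 : (((E v i).card : ℝ≥0∞)) * 2⁻¹ ^ k = 2⁻¹ ^ k := by
      simp [hE]
    have h2 : ∀ j ∈ Finset.univ.erase i,
        (((E v j).card : ℝ≥0∞)) * 2⁻¹ ^ k = ((2 ^ k - 1 : ℕ) : ℝ≥0∞) * 2⁻¹ ^ k := by
      intro j hj
      have hji : j ≠ i := (Finset.mem_erase.mp hj).1
      have : (E v j).card = 2 ^ k - 1 := by
        rw [hE]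
        simp only [if_neg hji]
        rw [Finset.card_compl, Finset.card_singleton]
        congr 1
        simp [Fintype.card_fun]
      rw [this]
    rw [h1, Finset.prod_congr rfl h2, Finset.prod_const, Finset.card_erase_of_mem
      (Finset.mem_univ i), Finset.card_univ, Fintype.card_fin]
  rw [tsum_congr hterm, tsum_fintype, Finset.sum_const, Finset.card_univ]
  have hcard : Fintype.card (Fin k → Bool) = 2 ^ k := by simp [Fintype.card_fun]
  rw [hcard, nsmul_eq_mul]
  have h2k : ((2 ^ k : ℕ) : ℝ≥0∞) = 2 ^ k := by push_cast; ring
  have hcancel : ((2 : ℝ≥0∞)) ^ k * 2⁻¹ ^ k = 1 := by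
    rw [← mul_pow, ENNReal.mul_inv_cancel (by norm_num) (by norm_num), one_pow]
  have hsub : ((2 ^ k - 1 : ℕ) : ℝ≥0∞) * 2⁻¹ ^ k = 1 - 2⁻¹ ^ k := by
    rw [ENNReal.natCast_sub, Nat.cast_one, h2k,
      ENNReal.sub_mul (fun _ _ => ENNReal.pow_ne_top (by norm_num)), hcancel, one_mul]
  rw [h2k, hsub, ← mul_assoc, hcancel, one_mul]
  have hr : (0:ℝ) ≤ 1 - (1/2 : ℝ) ^ k := by
    have : ((1:ℝ)/2) ^ k ≤ 1 := pow_le_one₀ (by norm_num) (by norm_num)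
    linarith
  rw [ENNReal.ofReal_pow hr]
  congr 1
  rw [ENNReal.ofReal_sub _ (by positivity), ENNReal.ofReal_one]
  congr 1
  rw [ENNReal.ofReal_pow (by norm_num)]
  congr 1
  rw [one_div, ENNReal.ofReal_inv_of_pos (by norm_num), ENNReal.ofReal_ofNat]

lemma trie_ne_measurable
    (hmeas : ∀ (i : Fin n) (k : ℕ), Measurable fun ω => X i ω k)
    (i j : Fin n) (m : ℕ) : MeasurableSet {ω : Ω | X i ω m ≠ X j ω m} := by
  have h : {ω : Ω | X i ω m ≠ X j ω m}
      = ⋃ b : Bool, ({ω | X i ω m = b} ∩ {ω | X j ω m = b}ᶜ) := by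
    ext ω
    simp only [Set.mem_setOf_eq, Set.mem_iUnion, Set.mem_inter_iff, Set.mem_compl_iff]
    constructor
    · intro h
      exact ⟨X i ω m, rfl, fun hc => h hc.symm⟩
    · rintro ⟨b, hb, hbj⟩ hc
      exact hbj (hc.symm.trans hb)
  rw [h]
  exact MeasurableSet.iUnion fun b =>
    (((hmeas i m) (measurableSet_singleton b)).inter
      ((hmeas j m) (measurableSet_singleton b)).compl)

lemma trie_C_measurable
    (hmeas : ∀ (i : Fin n) (k : ℕ), Measurable fun ω => X i ω k)
    (i : Fin n) (k : ℕ) :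
    MeasurableSet {ω : Ω | ∀ j, j ≠ i → ∃ m < k, X i ω m ≠ X j ω m} := by
  have h : {ω : Ω | ∀ j, j ≠ i → ∃ m < k, X i ω m ≠ X j ω m}
      = ⋂ (j : Fin n), ⋂ (_ : j ≠ i), ⋃ (m : ℕ), ⋃ (_ : m < k), {ω | X i ω m ≠ X j ω m} := by
    ext ω; simp
  rw [h]
  exact MeasurableSet.iInter fun j => MeasurableSet.iInter fun _ =>
    MeasurableSet.iUnion fun m => MeasurableSet.iUnion fun _ => trie_ne_measurable hmeas i j m

end Aux

/-- Expected path length of a random trie.  Let `X₁,…,Xₙ` (`n ≥ 2`) be random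
infinite binary strings whose bits are all independent and fair.  Let `Dᵢ` be the
depth of key `i` in the trie, i.e. the least `ℓ` such that the first `ℓ` bits of
`Xᵢ` differ (as a vector) from the first `ℓ` bits of every other `Xⱼ`.  Then each
`Dᵢ` is a.s. finite and the expected path length is
`E[D₁ + ⋯ + Dₙ] = n ∑_{k≥0} (1 - (1 - 2^{-k})^{n-1})`, which is finite. -/
theorem stmt19 {Ω : Type*} [MeasurableSpace Ω] (μ : Measure Ω) [IsProbabilityMeasure μ]
    (n : ℕ) (hn : 2 ≤ n)
    (X : Fin n → Ω → ℕ → Bool)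
    (hmeas : ∀ (i : Fin n) (k : ℕ), Measurable fun ω => X i ω k)
    (hindep : iIndepFun
      (fun p : Fin n × ℕ => fun ω => X p.1 ω p.2) μ)
    (hfair : ∀ (i : Fin n) (k : ℕ), μ {ω | X i ω k = true} = 1 / 2)
    (D : Fin n → Ω → ℕ)
    (hD : ∀ i ω, D i ω = sInf {ℓ : ℕ | ∀ j, j ≠ i → ∃ m < ℓ, X i ω m ≠ X j ω m}) :
    (∀ i, μ {ω | ∃ ℓ : ℕ, ∀ j, j ≠ i → ∃ m < ℓ, X i ω m ≠ X j ω m} = 1) ∧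
    ∫⁻ ω, ∑ i, (D i ω : ℝ≥0∞) ∂μ
      = ENNReal.ofReal ((n : ℝ) *
          ∑' k : ℕ, (1 - (1 - ((1 : ℝ) / 2) ^ k) ^ (n - 1))) := by
  classical
  set C : Fin n → ℕ → Set Ω :=
    fun i k => {ω | ∀ j, j ≠ i → ∃ m < k, X i ω m ≠ X j ω m} with hC
  set F : Fin n → Set Ω := fun i => ⋃ k, C i k with hF
  -- basic real facts
  set t : ℕ → ℝ := fun k => 1 - (1 - ((1 : ℝ) / 2) ^ k) ^ (n - 1) with ht
  have hr1 : ∀ k : ℕ, (0:ℝ) ≤ ((1:ℝ)/2) ^ k := fun k => by positivity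
  have hr2 : ∀ k : ℕ, ((1:ℝ)/2) ^ k ≤ 1 := fun k => pow_le_one₀ (by norm_num) (by norm_num)
  have hq1 : ∀ k : ℕ, (0:ℝ) ≤ (1 - ((1:ℝ)/2) ^ k) ^ (n - 1) := fun k =>
    pow_nonneg (by linarith [hr2 k]) _
  have hq2 : ∀ k : ℕ, (1 - ((1:ℝ)/2) ^ k) ^ (n - 1) ≤ 1 := fun k =>
    pow_le_one₀ (by linarith [hr2 k]) (by linarith [hr1 k])
  have htnonneg : ∀ k, 0 ≤ t k := fun k => by simp only [ht]; linarith [hq2 k]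
  have htle : ∀ k, t k ≤ (n - 1 : ℕ) * ((1:ℝ)/2) ^ k := by
    intro k
    have hb := one_add_mul_le_pow (a := -(((1:ℝ)/2) ^ k)) (by linarith [hr2 k]) (n - 1)
    simp only [ht]
    have : (1 : ℝ) + (n-1 : ℕ) * (-(((1:ℝ)/2) ^ k)) ≤ (1 - ((1:ℝ)/2) ^ k) ^ (n-1) := by
      convert hb using 2
      · rfl
      · ring
    nlinarith
  have htsummable : Summable t :=
    Summable.of_nonneg_of_le htnonneg htle
      (Summable.mul_left _ (summable_geometric_of_lt_one (by norm_num) (by norm_num)))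
  -- measure computations
  have hCms : ∀ i k, MeasurableSet (C i k) := fun i k => trie_C_measurable hmeas i k
  have hCmeas : ∀ i k, μ (C i k) = ENNReal.ofReal ((1 - ((1 : ℝ) / 2) ^ k) ^ (n - 1)) :=
    fun i k => trie_C hindep hmeas hfair i k
  have hCcompl : ∀ i k, μ (C i k)ᶜ = ENNReal.ofReal (t k) := by
    intro i k
    rw [measure_compl (hCms i k) (measure_ne_top μ _), measure_univ, hCmeas i k, ht]
    rw [ENNReal.ofReal_sub _ (hq1 k), ENNReal.ofReal_one]
  have hFms : ∀ i, MeasurableSet (F i) := fun i => MeasurableSet.iUnion fun k => hCms i k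
  have hFcompl : ∀ i, μ (F i)ᶜ = 0 := by
    intro i
    have hle : ∀ k : ℕ, μ (F i)ᶜ ≤ ENNReal.ofReal ((n - 1 : ℕ) * ((1:ℝ)/2) ^ k) := by
      intro k
      calc μ (F i)ᶜ ≤ μ (C i k)ᶜ :=
            measure_mono (Set.compl_subset_compl.mpr (Set.subset_iUnion (C i) k))
        _ = ENNReal.ofReal (t k) := hCcompl i k
        _ ≤ _ := ENNReal.ofReal_le_ofReal (htle k)
    have htend : Filter.Tendsto (fun k : ℕ => ENNReal.ofReal ((n - 1 : ℕ) * ((1:ℝ)/2) ^ k))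
        Filter.atTop (nhds 0) := by
      have : Filter.Tendsto (fun k : ℕ => ((n - 1 : ℕ) : ℝ) * ((1:ℝ)/2) ^ k)
          Filter.atTop (nhds 0) := by
        have := (tendsto_pow_atTop_nhds_zero_of_lt_one (r := (1:ℝ)/2) (by norm_num)
          (by norm_num)).const_mul ((n - 1 : ℕ) : ℝ)
        simpa using this
      simpa using ENNReal.tendsto_ofReal this
    exact le_antisymm (ge_of_tendsto' htend hle) zero_le
  have part1 : ∀ i, μ {ω | ∃ ℓ : ℕ, ∀ j, j ≠ i → ∃ m < ℓ, X i ω m ≠ X j ω m} = 1 := by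
    intro i
    have : {ω | ∃ ℓ : ℕ, ∀ j, j ≠ i → ∃ m < ℓ, X i ω m ≠ X j ω m} = F i := by
      ext ω; simp [hF, hC]
    rw [this]
    exact (prob_compl_eq_zero_iff (hFms i)).mp (hFcompl i)
  refine ⟨part1, ?_⟩
  -- the sets {k < D i}
  have hDgt : ∀ i k, {ω | k < D i ω} = (C i k)ᶜ ∩ F i := by
    intro i k
    ext ω
    have hup : ∀ a b : ℕ, a ≤ b → ω ∈ C i a → ω ∈ C i b := by
      intro a b hab ha j hj
      obtain ⟨m, hm, hne⟩ := ha j hj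
      exact ⟨m, lt_of_lt_of_le hm hab, hne⟩
    simp only [Set.mem_setOf_eq, Set.mem_inter_iff, Set.mem_compl_iff, hD i ω]
    by_cases hωF : ω ∈ F i
    · obtain ⟨ℓ₀, hℓ₀⟩ := Set.mem_iUnion.mp hωF
      constructor
      · intro hlt
        refine ⟨fun hωC => ?_, hωF⟩
        exact absurd (Nat.sInf_le hωC) (not_le.mpr hlt)
      · rintro ⟨hωC, -⟩
        have hne : Set.Nonempty {ℓ : ℕ | ∀ j, j ≠ i → ∃ m < ℓ, X i ω m ≠ X j ω m} := ⟨ℓ₀, hℓ₀⟩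
        have hmem := Nat.sInf_mem hne
        by_contra hnot
        exact hωC (hup _ _ (not_lt.mp hnot) hmem)
    · have hempty : {ℓ : ℕ | ∀ j, j ≠ i → ∃ m < ℓ, X i ω m ≠ X j ω m} = ∅ := by
        rw [Set.eq_empty_iff_forall_notMem]
        intro ℓ hℓ
        exact hωF (Set.mem_iUnion.mpr ⟨ℓ, hℓ⟩)
      rw [hempty]
      simp [Nat.sInf_empty, hωF]
  have hDgt_ms : ∀ i k, MeasurableSet {ω | k < D i ω} := by
    intro i k; rw [hDgt]; exact ((hCms i k).compl).inter (hFms i)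
  have hDgt_meas : ∀ i k, μ {ω | k < D i ω} = ENNReal.ofReal (t k) := by
    intro i k
    rw [hDgt, measure_inter_conull (hFcompl i), hCcompl]
  -- layer cake
  have hlayer : ∀ i : Fin n, ∫⁻ ω, (D i ω : ℝ≥0∞) ∂μ = ∑' k : ℕ, μ {ω | k < D i ω} := by
    intro i
    have hpt : ∀ ω, (D i ω : ℝ≥0∞)
        = ∑' k : ℕ, Set.indicator {ω | k < D i ω} (fun _ => (1:ℝ≥0∞)) ω := by
      intro ω
      have h1 : ∀ k : ℕ, Set.indicator {ω | k < D i ω} (fun _ => (1:ℝ≥0∞)) ω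
          = if k < D i ω then 1 else 0 := fun k => Set.indicator_apply _ _ _
      rw [tsum_congr h1, tsum_eq_sum (s := Finset.range (D i ω))
        (fun b hb => by simp [Finset.mem_range] at hb; simp [Nat.not_lt.mpr hb])]
      rw [Finset.sum_congr rfl (fun b hb => if_pos (Finset.mem_range.mp hb)),
        Finset.sum_const, Finset.card_range, nsmul_eq_mul, mul_one]
    calc ∫⁻ ω, (D i ω : ℝ≥0∞) ∂μ
        = ∫⁻ ω, ∑' k : ℕ, Set.indicator {ω | k < D i ω} (fun _ => (1:ℝ≥0∞)) ω ∂μ := by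
          exact lintegral_congr hpt
      _ = ∑' k : ℕ, ∫⁻ ω, Set.indicator {ω | k < D i ω} (fun _ => (1:ℝ≥0∞)) ω ∂μ :=
          lintegral_tsum fun k =>
            (measurable_const.indicator (hDgt_ms i k)).aemeasurable
      _ = ∑' k : ℕ, μ {ω | k < D i ω} := by
          refine tsum_congr fun k => ?_
          exact lintegral_indicator_one (hDgt_ms i k)
  -- measurability of D i
  have hDmeas : ∀ i : Fin n, Measurable (D i) := by
    intro i
    apply measurable_to_countable'
    intro m
    match m with
    | 0 =>
      have : D i ⁻¹' {0} = {ω | 0 < D i ω}ᶜ := by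
        ext ω; simp [Nat.pos_iff_ne_zero]
      rw [this]; exact (hDgt_ms i 0).compl
    | (m + 1) =>
      have : D i ⁻¹' {m + 1} = {ω | m < D i ω} ∩ {ω | m + 1 < D i ω}ᶜ := by
        ext ω
        simp only [Set.mem_preimage, Set.mem_singleton_iff, Set.mem_inter_iff,
          Set.mem_compl_iff, Set.mem_setOf_eq, not_lt]
        omega
      rw [this]; exact (hDgt_ms i m).inter (hDgt_ms i (m+1)).compl
  -- final computation
  have hsum : ∀ i : Fin n, ∫⁻ ω, (D i ω : ℝ≥0∞) ∂μ
      = ENNReal.ofReal (∑' k : ℕ, t k) := by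
    intro i
    rw [hlayer i, tsum_congr (fun k => hDgt_meas i k),
      ← ENNReal.ofReal_tsum_of_nonneg htnonneg htsummable]
  rw [lintegral_finset_sum (f := fun i ω => ((D i ω : ℝ≥0∞))) Finset.univ
    (fun i _ => measurable_from_nat.comp (hDmeas i))]
  rw [Finset.sum_congr rfl (fun i _ => hsum i), Finset.sum_const, Finset.card_univ,
    Fintype.card_fin, nsmul_eq_mul]
  rw [ENNReal.ofReal_mul (by positivity), ENNReal.ofReal_natCast]
end
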